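/- Let f : ℝ^n → ℝ ∪ {+∞} be proper, lower semicontinuous, coercive, and uniformly quasiconvex with modulus φ on a closed convex set C ⊆ dom f, and let γ > 0 and p > 1. Then for x̄ ∈ C the following are equivalent: (i) x̄ minimizes the high-order Moreau envelope e(x) = inf_{y∈C} ( f(y) + (1/(pγ))‖x − y‖^p ) over C; (ii) x̄ minimizes f over C; (iii) x̄ is a proximal fixed point, i.e., x̄ ∈ argmin_{y∈C} ( f(y) + (1/(pγ))‖x̄ − y‖^p ); (iv) x̄ is a stationary point of f on C in the lower Dini sense. -/

import Mathlib

noncomputable section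

open Set Filter

/-- `φ : [0,∞) → [0,∞]` is a modulus: increasing and vanishing only at `0`. -/
def IsModulus (φ : ℝ → EReal) : Prop :=
  (∀ ⦃s t : ℝ⦄, 0 ≤ s → s ≤ t → φ s ≤ φ t) ∧ φ 0 = 0 ∧ (∀ t : ℝ, 0 < t → 0 < φ t)

/-- `f` is uniformly quasiconvex on `C` with modulus `φ`. -/
def UnifQuasiconvexOn {E : Type*} [NormedAddCommGroup E] [NormedSpace ℝ E]
    (C : Set E) (φ : ℝ → EReal) (f : E → EReal) : Prop :=
  ∀ ⦃x⦄, x ∈ C → ∀ ⦃y⦄, y ∈ C → ∀ ⦃l : ℝ⦄, l ∈ Set.Icc (0 : ℝ) 1 →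
    f (l • x + (1 - l) • y) + ((l * (1 - l) : ℝ) : EReal) * φ ‖x - y‖ ≤ max (f x) (f y)

/-- `f(x) → +∞` as `‖x‖ → +∞`. -/
def Coercive {E : Type*} [NormedAddCommGroup E] (f : E → EReal) : Prop :=
  ∀ M : ℝ, ∃ R : ℝ, ∀ x : E, R ≤ ‖x‖ → (M : EReal) < f x

/-- The high-order proximal set `prox_{f,γ}^p(C, x) = argmin_{y ∈ C} (f(y) + (1/(pγ))‖x − y‖^p)`. -/
def HOProx {E : Type*} [NormedAddCommGroup E]
    (f : E → EReal) (C : Set E) (p γ : ℝ) (x : E) : Set E :=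
  {y | y ∈ C ∧ ∀ z ∈ C,
    f y + ((1 / (p * γ) * ‖x - y‖ ^ p : ℝ) : EReal)
      ≤ f z + ((1 / (p * γ) * ‖x - z‖ ^ p : ℝ) : EReal)}

/-- The high-order Moreau envelope `e(x) = inf_{y ∈ C} (f(y) + (1/(pγ))‖x − y‖^p)`. -/
def HOMoreau {E : Type*} [NormedAddCommGroup E]
    (f : E → EReal) (C : Set E) (p γ : ℝ) (x : E) : EReal :=
  ⨅ y ∈ C, (f y + ((1 / (p * γ) * ‖x - y‖ ^ p : ℝ) : EReal))

/-- The lower Dini directional derivative of `f` at `x` in direction `d`,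
`liminf_{t↓0} (f(x + t d) − f(x))/t`. -/
def diniLower {E : Type*} [NormedAddCommGroup E] [NormedSpace ℝ E]
    (f : E → EReal) (x d : E) : EReal :=
  Filter.liminf (fun t : ℝ => ((t⁻¹ : ℝ) : EReal) * (f (x + t • d) - f x))
    (nhdsWithin 0 (Set.Ioi 0))

/-- `x̄ ∈ dom f ∩ C` is a stationary point of `f` on the convex set `C` in the lower Dini
sense. -/
def IsStationaryOn {E : Type*} [NormedAddCommGroup E] [NormedSpace ℝ E]
    (f : E → EReal) (C : Set E) (xb : E) : Prop :=
  xb ∈ C ∧ f xb ≠ ⊤ ∧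
    ∀ d : E, (∃ δ > (0 : ℝ), ∀ l : ℝ, l ∈ Set.Ioo (0 : ℝ) δ → xb + l • d ∈ C) →
      (0 : EReal) ≤ diniLower f xb d

/-- For `f` proper, lsc, coercive and uniformly quasiconvex with
modulus `φ` on a closed convex set `C ⊆ dom f`, `γ > 0`, `p > 1` and `x̄ ∈ C`, the
following are equivalent: (i) `x̄` minimizes the Moreau envelope over `C`; (ii) `x̄`
minimizes `f` over `C`; (iii) `x̄` is a proximal fixed point; (iv) `x̄` is a lower-Dini
stationary point of `f` on `C`. -/
lemma exists_lb (n : ℕ) (f : EuclideanSpace ℝ (Fin n) → EReal) (hbot : ∀ x, f x ≠ ⊥)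
    (hlsc : LowerSemicontinuous f) (hcoer : Coercive f) :
    ∃ b : ℝ, ∀ x, (b : EReal) ≤ f x := by
  obtain ⟨R, hR⟩ := hcoer 0
  set K := Metric.closedBall (0 : EuclideanSpace ℝ (Fin n)) (max R 0) with hK
  have hKc : IsCompact K := isCompact_closedBall _ _
  have hchoose : ∀ x : EuclideanSpace ℝ (Fin n), ∃ b : ℝ, (b : EReal) < f x := by
    intro x
    obtain ⟨y, hy1, hy2⟩ := exists_between ((hbot x).bot_lt)
    obtain ⟨b, hb1, hb2⟩ := EReal.exists_between_coe_real hy2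
    exact ⟨b, hb2⟩
  choose b hb using hchoose
  have hU : ∀ x ∈ K, {z | (b x : EReal) < f z} ∈ nhds x := fun x _ => hlsc x (b x) (hb x)
  obtain ⟨t, htK, hcover⟩ := hKc.elim_nhds_subcover _ hU
  have h0K : (0 : EuclideanSpace ℝ (Fin n)) ∈ K := by simp [hK, le_max_right]
  obtain ⟨x0, hx0t, -⟩ := mem_iUnion₂.1 (hcover h0K)
  have htne : t.Nonempty := ⟨x0, hx0t⟩
  refine ⟨min (t.inf' htne b) 0, fun x => ?_⟩
  rcases le_or_gt R ‖x‖ with h | h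
  · exact le_trans (by exact_mod_cast min_le_right _ _) (hR x h).le
  · have hxK : x ∈ K := by
      simp only [hK, Metric.mem_closedBall, dist_zero_right]
      exact h.le.trans (le_max_left _ _)
    obtain ⟨i, hit, hxi⟩ := mem_iUnion₂.1 (hcover hxK)
    refine le_trans ?_ (le_of_lt hxi)
    exact_mod_cast (min_le_left _ _).trans (Finset.inf'_le _ hit)

theorem statement_11 (n : ℕ) (f : EuclideanSpace ℝ (Fin n) → EReal)
    (hproper : ∃ x, f x ≠ ⊤) (hbot : ∀ x, f x ≠ ⊥)
    (hlsc : LowerSemicontinuous f) (hcoer : Coercive f)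
    (C : Set (EuclideanSpace ℝ (Fin n)))
    (hCclosed : IsClosed C) (hCconv : Convex ℝ C)
    (hdom : ∀ x ∈ C, f x ≠ ⊤)
    (φ : ℝ → EReal) (hφ : IsModulus φ)
    (hquasi : UnifQuasiconvexOn C φ f)
    (γ p : ℝ) (hγ : 0 < γ) (hp : 1 < p)
    (xb : EuclideanSpace ℝ (Fin n)) (hxb : xb ∈ C) :
    ((∀ z ∈ C, HOMoreau f C p γ xb ≤ HOMoreau f C p γ z) ↔ (∀ z ∈ C, f xb ≤ f z)) ∧
    ((∀ z ∈ C, f xb ≤ f z) ↔ xb ∈ HOProx f C p γ xb) ∧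
    (xb ∈ HOProx f C p γ xb ↔ IsStationaryOn f C xb) := by
  classical
  set c : ℝ := 1 / (p * γ) with hcdef
  have hc0 : 0 < c := by
    apply div_pos one_pos (mul_pos (by linarith) hγ)
  have hp0 : (0:ℝ) < p := by linarith
  have hcost : ∀ x y : EuclideanSpace ℝ (Fin n), 0 ≤ c * ‖x - y‖ ^ p := fun x y =>
    mul_nonneg hc0.le (Real.rpow_nonneg (norm_nonneg _) _)
  have hcost0 : ∀ x : EuclideanSpace ℝ (Fin n), c * ‖x - x‖ ^ p = 0 := fun x => by
    simp [Real.zero_rpow hp0.ne']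
  have hreal : ∀ x ∈ C, ∃ r : ℝ, f x = (r : EReal) := fun x hx =>
    ⟨(f x).toReal, (EReal.coe_toReal (hdom x hx) (hbot x)).symm⟩
  have hle_term : ∀ (x y : EuclideanSpace ℝ (Fin n)),
      f y ≤ f y + ((c * ‖x - y‖ ^ p : ℝ) : EReal) := fun x y =>
    le_add_of_nonneg_right (by exact_mod_cast hcost x y)
  have henv_le : ∀ (x : EuclideanSpace ℝ (Fin n)), ∀ y ∈ C,
      HOMoreau f C p γ x ≤ f y + ((c * ‖x - y‖ ^ p : ℝ) : EReal) := fun x y hy =>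
    iInf₂_le y hy
  have henv_le_f : ∀ y ∈ C, HOMoreau f C p γ y ≤ f y := fun y hy => by
    have := henv_le y y hy
    rwa [hcost0 y, EReal.coe_zero, add_zero] at this
  obtain ⟨b0, hb0⟩ := exists_lb n f hbot hlsc hcoer
  -- (ii) → (iii)
  have h23 : (∀ z ∈ C, f xb ≤ f z) → xb ∈ HOProx f C p γ xb := by
    intro h
    refine ⟨hxb, fun z hz => ?_⟩
    have h1 : f xb + ((c * ‖xb - xb‖ ^ p : ℝ) : EReal) = f xb := by
      rw [hcost0 xb, EReal.coe_zero, add_zero]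
    rw [h1]
    exact (h z hz).trans (hle_term xb z)
  -- (iii) → (ii)  [uses quasiconvexity]
  have h32 : xb ∈ HOProx f C p γ xb → ∀ z ∈ C, f xb ≤ f z := by
    rintro ⟨-, hprox⟩ z hz
    by_contra hltc
    push_neg at hltc
    have hzne : z ≠ xb := by rintro rfl; exact lt_irrefl _ hltc
    set d : ℝ := ‖z - xb‖ with hddef
    have hd : 0 < d := by
      rw [hddef, norm_pos_iff, sub_ne_zero]; exact hzne
    obtain ⟨a, ha⟩ := hreal xb hxb
    obtain ⟨rz, hrz⟩ := hreal z hz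
    -- general consequence of quasiconvexity + prox inequality
    have key : ∀ l : ℝ, 0 < l → l < 1 →
        (a : EReal) + ((l * (1 - l) : ℝ) : EReal) * φ d
          ≤ (a : EReal) + ((c * (l * d) ^ p : ℝ) : EReal) := by
      intro l hl0 hl1
      set w := l • z + (1 - l) • xb with hw
      have hwC : w ∈ C := hCconv hz hxb hl0.le (by linarith) (by ring)
      have hquasi' := hquasi hz hxb (Set.mem_Icc.2 ⟨hl0.le, hl1.le⟩)
      rw [← hw, ← hddef] at hquasi'
      have hmax : max (f z) (f xb) = f xb := max_eq_right hltc.le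
      rw [hmax] at hquasi'
      have hnorm : ‖xb - w‖ = l * d := by
        have : xb - w = l • (xb - z) := by rw [hw]; module
        rw [this, norm_smul, Real.norm_eq_abs, abs_of_pos hl0, hddef, norm_sub_rev]
      have hprox' := hprox w hwC
      rw [hcost0 xb, EReal.coe_zero, add_zero, hnorm] at hprox'
      calc (a : EReal) + ((l * (1 - l) : ℝ) : EReal) * φ d
          = f xb + ((l * (1 - l) : ℝ) : EReal) * φ d := by rw [ha]
        _ ≤ f w + ((c * (l * d) ^ p : ℝ) : EReal) + ((l * (1 - l) : ℝ) : EReal) * φ d := by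
            exact add_le_add_left hprox' _
        _ = (f w + ((l * (1 - l) : ℝ) : EReal) * φ d) + ((c * (l * d) ^ p : ℝ) : EReal) :=
            add_right_comm _ _ _
        _ ≤ f xb + ((c * (l * d) ^ p : ℝ) : EReal) := add_le_add_left hquasi' _
        _ = (a : EReal) + ((c * (l * d) ^ p : ℝ) : EReal) := by rw [ha]
    -- φ d cannot be ⊤
    have hφd_pos : (0 : EReal) < φ d := hφ.2.2 d hd
    by_cases hφt : φ d = ⊤
    · have := key (1/2) (by norm_num) (by norm_num)
      rw [hφt] at this
      have h2 : ((1/2 * (1 - 1/2) : ℝ) : EReal) * ⊤ = ⊤ :=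
        EReal.coe_mul_top_of_pos (by norm_num)
      rw [h2, EReal.add_top_of_ne_bot (by exact_mod_cast EReal.coe_ne_bot a)] at this
      exact (EReal.coe_ne_top _) (top_le_iff.1 this)
    · set c0 : ℝ := (φ d).toReal with hc0def
      have hφdr : φ d = (c0 : EReal) := (EReal.coe_toReal hφt (ne_bot_of_gt hφd_pos)).symm
      have hc0pos : 0 < c0 := by
        rw [hφdr] at hφd_pos; exact_mod_cast hφd_pos
      -- choose small l
      have htend : Filter.Tendsto (fun l : ℝ => c * d ^ p * l ^ (p-1))
          (nhdsWithin 0 (Set.Ioi 0)) (nhds 0) := by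
        have h1 := (Real.continuousAt_rpow_const 0 (p-1) (Or.inr (by linarith))).tendsto
        rw [Real.zero_rpow (by linarith : p - 1 ≠ 0)] at h1
        have h2 : Filter.Tendsto (fun l : ℝ => c * d ^ p * l ^ (p - 1)) (nhds (0:ℝ)) (nhds (c * d ^ p * 0)) :=
          Filter.Tendsto.const_mul (c * d ^ p) h1
        rw [mul_zero] at h2
        exact h2.mono_left nhdsWithin_le_nhds
      have hev : ∀ᶠ l in nhdsWithin (0:ℝ) (Set.Ioi 0),
          c * d ^ p * l ^ (p-1) < c0 / 2 ∧ l ∈ Set.Ioo (0:ℝ) (1/2) := by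
        refine ((htend.eventually (Filter.Tendsto.eventually_lt_const (by positivity) tendsto_id)).and
          (Ioo_mem_nhdsGT_of_mem ⟨le_refl 0, by norm_num⟩))
      obtain ⟨l, hl1, hl2⟩ := hev.exists
      obtain ⟨hl0, hlhalf⟩ := hl2
      have hkey := key l hl0 (by linarith)
      rw [hφdr, ← EReal.coe_mul, ← EReal.coe_add, ← EReal.coe_add, EReal.coe_le_coe_iff] at hkey
      -- real contradiction
      have hrw : (l * d) ^ p = l ^ (p-1) * l * d ^ p := by
        rw [Real.mul_rpow hl0.le hd.le, ← Real.rpow_add_one hl0.ne' (p-1)]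
        ring_nf
      rw [hrw] at hkey
      have he1 : c * (l ^ (p-1) * l * d ^ p) = (c * d ^ p * l ^ (p-1)) * l := by ring
      have he2 : (c * d ^ p * l ^ (p-1)) * l < (c0 / 2) * l := by
        exact mul_lt_mul_of_pos_right hl1 hl0
      nlinarith [mul_nonneg (mul_nonneg hl0.le hc0pos.le) (by linarith : (0:ℝ) ≤ 1/2 - l)]
  -- (ii) → (i)
  have h21 : (∀ z ∈ C, f xb ≤ f z) → ∀ z ∈ C, HOMoreau f C p γ xb ≤ HOMoreau f C p γ z := by
    intro h z hz
    refine le_trans (henv_le_f xb hxb) (le_iInf₂ fun y hy => (h y hy).trans (hle_term z y))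
  -- (i) → (ii)
  have h12 : (∀ z ∈ C, HOMoreau f C p γ xb ≤ HOMoreau f C p γ z) → ∀ z ∈ C, f xb ≤ f z := by
    intro H z hz
    have hEf : ∀ w ∈ C, HOMoreau f C p γ xb ≤ f w := fun w hw => (H w hw).trans (henv_le_f w hw)
    suffices hsuff : f xb ≤ HOMoreau f C p γ xb from hsuff.trans (hEf z hz)
    by_contra hlt
    push_neg at hlt
    have hlb : (b0 : EReal) ≤ HOMoreau f C p γ xb :=
      le_iInf₂ fun y hy => (hb0 y).trans (hle_term xb y)
    have hub : HOMoreau f C p γ xb ≤ f xb := hEf xb hxb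
    obtain ⟨m, hm⟩ : ∃ m : ℝ, HOMoreau f C p γ xb = (m : EReal) :=
      ⟨_, (EReal.coe_toReal (fun h => (hdom xb hxb) (top_le_iff.1 (h ▸ hub)))
        (fun h => (EReal.coe_ne_bot b0) (le_bot_iff.1 (h ▸ hlb)))).symm⟩
    rw [hm] at hlt
    obtain ⟨b, hb1, hb2⟩ := EReal.exists_between_coe_real hlt
    have hb1' : m < b := by exact_mod_cast hb1
    obtain ⟨ε, hε, hball⟩ := Metric.eventually_nhds_iff.1 (hlsc xb b hb2)
    have hlow : min ((b : EReal)) ((m + c * ε ^ p : ℝ) : EReal) ≤ HOMoreau f C p γ xb := by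
      refine le_iInf₂ fun y hy => ?_
      by_cases hyε : dist y xb < ε
      · exact (min_le_left _ _).trans ((hball hyε).le.trans (hle_term xb y))
      · refine (min_le_right _ _).trans ?_
        push_neg at hyε
        have h1 : (m : EReal) ≤ f y := hm ▸ hEf y hy
        have h2 : c * ε ^ p ≤ c * ‖xb - y‖ ^ p := by
          apply mul_le_mul_of_nonneg_left _ hc0.le
          apply Real.rpow_le_rpow hε.le _ hp0.le
          rw [norm_sub_rev, ← dist_eq_norm]
          exact hyε
        calc ((m + c * ε ^ p : ℝ) : EReal) = (m : EReal) + ((c * ε ^ p : ℝ) : EReal) := by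
              rw [EReal.coe_add]
          _ ≤ f y + ((c * ‖xb - y‖ ^ p : ℝ) : EReal) :=
              add_le_add h1 (by exact_mod_cast h2)
      done
    rw [hm] at hlow
    have hcε : 0 < c * ε ^ p := mul_pos hc0 (Real.rpow_pos_of_pos hε _)
    have : (m : EReal) < min ((b : EReal)) ((m + c * ε ^ p : ℝ) : EReal) :=
      lt_min (by exact_mod_cast hb1') (by exact_mod_cast (by linarith : m < m + c * ε ^ p))
    exact absurd (this.trans_le hlow) (lt_irrefl _)
  -- (ii) → (iv)
  have h24 : (∀ z ∈ C, f xb ≤ f z) → IsStationaryOn f C xb := by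
    intro h
    refine ⟨hxb, hdom xb hxb, fun d hd => ?_⟩
    obtain ⟨δ, hδ, hfeas⟩ := hd
    have hev : ∀ᶠ t in nhdsWithin (0:ℝ) (Set.Ioi 0),
        (0 : EReal) ≤ ((t⁻¹ : ℝ) : EReal) * (f (xb + t • d) - f xb) := by
      filter_upwards [Ioo_mem_nhdsGT_of_mem ⟨le_refl 0, hδ⟩] with t ht
      have hC' : xb + t • d ∈ C := hfeas t ht
      have h1 : f xb ≤ f (xb + t • d) := h _ hC'
      have h2 : (0 : EReal) ≤ f (xb + t • d) - f xb := by
        rw [EReal.le_sub_iff_add_le (Or.inl (hbot xb)) (Or.inl (hdom xb hxb)), zero_add]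
        exact h1
      exact mul_nonneg (by exact_mod_cast (inv_nonneg.2 ht.1.le)) h2
    exact Filter.le_liminf_of_le (by isBoundedDefault) hev
  -- (iv) → (ii)
  have h42 : IsStationaryOn f C xb → ∀ z ∈ C, f xb ≤ f z := by
    rintro ⟨-, -, hstat⟩ z hz
    by_contra hltc
    push_neg at hltc
    have hzne : z ≠ xb := by rintro rfl; exact lt_irrefl _ hltc
    set d0 : ℝ := ‖z - xb‖ with hd0def
    have hd0 : 0 < d0 := by rw [hd0def, norm_pos_iff, sub_ne_zero]; exact hzne
    obtain ⟨a, ha⟩ := hreal xb hxb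
    have hmax : max (f z) (f xb) = f xb := max_eq_right hltc.le
    have hquasi0 : ∀ l : ℝ, 0 < l → l < 1 →
        f (l • z + (1 - l) • xb) + ((l * (1 - l) : ℝ) : EReal) * φ d0 ≤ f xb := by
      intro l hl0 hl1
      have := hquasi hz hxb (Set.mem_Icc.2 ⟨hl0.le, hl1.le⟩)
      rwa [← hd0def, hmax] at this
    have hφd_pos : (0 : EReal) < φ d0 := hφ.2.2 d0 hd0
    by_cases hφt : φ d0 = ⊤
    · have hwC : (1/2 : ℝ) • z + (1 - 1/2 : ℝ) • xb ∈ C :=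
        hCconv hz hxb (by norm_num) (by norm_num) (by norm_num)
      have := hquasi0 (1/2) (by norm_num) (by norm_num)
      rw [hφt] at this
      have h2 : ((1/2 * (1 - 1/2) : ℝ) : EReal) * ⊤ = ⊤ :=
        EReal.coe_mul_top_of_pos (by norm_num)
      rw [h2, EReal.add_top_of_ne_bot (hbot _)] at this
      exact (hdom xb hxb) (top_le_iff.1 this)
    · set c0 : ℝ := (φ d0).toReal with hc0def
      have hφdr : φ d0 = (c0 : EReal) := (EReal.coe_toReal hφt (ne_bot_of_gt hφd_pos)).symm
      have hc0pos : 0 < c0 := by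
        rw [hφdr] at hφd_pos; exact_mod_cast hφd_pos
      set d : EuclideanSpace ℝ (Fin n) := z - xb with hddef
      have hfeas : ∃ δ > (0:ℝ), ∀ l : ℝ, l ∈ Set.Ioo (0:ℝ) δ → xb + l • d ∈ C := by
        refine ⟨1, one_pos, fun l hl => ?_⟩
        have hmem : l • z + (1 - l) • xb ∈ C :=
          hCconv hz hxb hl.1.le (by linarith [hl.2] : (0:ℝ) ≤ 1 - l) (by ring)
        have heq : xb + l • d = l • z + (1 - l) • xb := by rw [hddef]; module
        rw [heq]; exact hmem
      have hkey := hstat d hfeas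
      have hub : ∀ᶠ l in nhdsWithin (0:ℝ) (Set.Ioi 0),
          ((l⁻¹ : ℝ) : EReal) * (f (xb + l • d) - f xb) ≤ ((-(c0/2) : ℝ) : EReal) := by
        filter_upwards [Ioo_mem_nhdsGT_of_mem ⟨le_refl 0, (by norm_num : (0:ℝ) < 1/2)⟩] with l hl
        obtain ⟨hl0, hlhalf⟩ := hl
        have hl1 : l < 1 := by linarith
        set w := l • z + (1 - l) • xb with hw
        have hwC : w ∈ C := hCconv hz hxb hl0.le (by linarith) (by ring)
        obtain ⟨rw0, hrw0⟩ := hreal w hwC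
        have heq : xb + l • d = w := by rw [hw, hddef]; module
        have hq := hquasi0 l hl0 hl1
        rw [← hw, hrw0, ha, hφdr, ← EReal.coe_mul, ← EReal.coe_add, EReal.coe_le_coe_iff] at hq
        -- hq : rw0 + l * (1-l) * c0 ≤ a
        rw [heq, hrw0, ha, ← EReal.coe_sub, ← EReal.coe_mul, EReal.coe_le_coe_iff]
        have hquot : l⁻¹ * (rw0 - a) ≤ -((1 - l) * c0) := by
          rw [inv_mul_le_iff₀ hl0]
          nlinarith
        refine hquot.trans ?_
        nlinarith
      have hlim : diniLower f xb d ≤ ((-(c0/2) : ℝ) : EReal) :=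
        Filter.liminf_le_of_frequently_le hub.frequently
      have : (0 : EReal) ≤ ((-(c0/2) : ℝ) : EReal) := hkey.trans hlim
      rw [← EReal.coe_zero, EReal.coe_le_coe_iff] at this
      linarith
  exact ⟨⟨h12, h21⟩, ⟨h23, fun h => h32 h⟩, ⟨fun h => h24 (h32 h), fun h => h23 (h42 h)⟩⟩
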